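/- arXiv:2301.09951 — 2 statements merged into one kernel-verified Lean document; each statement's English description precedes it below -/
import Mathlib

section
/- Let R² = v/(v+σ²) where σ² > 0 is fixed. Then R² ~ Beta(a,b) if and only if v ~ GBP(a,b,1,σ²). -/
open MeasureTheory ProbabilityTheory Real Filter Finset

noncomputable section

/-- Gamma density with shape `a` and rate `r`. -/
def gammaPdf (a r x : ℝ) : ℝ :=
  if 0 < x then r ^ a / Real.Gamma a * x ^ (a - 1) * Real.exp (-(r * x)) else 0

/-- Beta function. -/
def betaFn (a b : ℝ) : ℝ := Real.Gamma a * Real.Gamma b / Real.Gamma (a + b)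

/-- Beta prime density. -/
def betaPrimePdf (a b x : ℝ) : ℝ :=
  if 0 < x then x ^ (a - 1) * (1 + x) ^ (-(a + b)) / betaFn a b else 0

/-- Generalized beta prime density. -/
def gbpPdf (a b c d x : ℝ) : ℝ :=
  if 0 ≤ x then c * (x / d) ^ (a * c - 1) * (1 + (x / d) ^ c) ^ (-(a + b)) / (d * betaFn a b)
  else 0

/-- Beta density. -/
def betaPdf (a b x : ℝ) : ℝ :=
  if 0 < x ∧ x < 1 then x ^ (a - 1) * (1 - x) ^ (b - 1) / betaFn a b else 0

/-- The measure on ℝ with Lebesgue density `f`. -/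
def pdfMeasure (f : ℝ → ℝ) : Measure ℝ :=
  MeasureTheory.volume.withDensity fun x => ENNReal.ofReal (f x)

lemma betaFn_pos {a b : ℝ} (ha : 0 < a) (hb : 0 < b) : 0 < betaFn a b :=
  div_pos (mul_pos (Real.Gamma_pos_of_pos ha) (Real.Gamma_pos_of_pos hb))
    (Real.Gamma_pos_of_pos (by linarith))

lemma key_pointwise {a b σ2 : ℝ} (ha : 0 < a) (hb : 0 < b) (hσ : 0 < σ2) {x : ℝ} (hx : 0 < x) :
    σ2 / (x + σ2) ^ 2 * betaPdf a b (x / (x + σ2)) = gbpPdf a b 1 σ2 x := by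
  have hu : 0 < x + σ2 := by linarith
  have hg1 : 0 < x / (x + σ2) := div_pos hx hu
  have hg2 : x / (x + σ2) < 1 := (div_lt_one hu).2 (by linarith)
  have hB : 0 < betaFn a b := betaFn_pos ha hb
  rw [betaPdf, gbpPdf, if_pos ⟨hg1, hg2⟩, if_pos hx.le]
  have h1 : 1 - x / (x + σ2) = σ2 / (x + σ2) := by field_simp; ring
  have h2 : 1 + (x / σ2) ^ (1:ℝ) = (x + σ2) / σ2 := by
    rw [Real.rpow_one]; field_simp; ring
  rw [h1, h2, mul_one, one_mul]
  rw [Real.div_rpow hx.le hu.le, Real.div_rpow hσ.le hu.le, Real.div_rpow hx.le hσ.le,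
    Real.rpow_neg (by positivity), Real.div_rpow hu.le hσ.le]
  have e1 : (x + σ2) ^ (2:ℕ) * ((x+σ2)^(a-1) * (x+σ2)^(b-1)) = (x+σ2)^(a+b) := by
    rw [show ((x+σ2)^(2:ℕ) : ℝ) = (x+σ2)^((2:ℕ):ℝ) from (Real.rpow_natCast _ 2).symm,
      ← Real.rpow_add hu, ← Real.rpow_add hu]; norm_num; ring_nf
  have e2 : σ2 * σ2 ^ (b-1) = σ2 ^ b := by
    nth_rewrite 1 [← Real.rpow_one σ2]
    rw [← Real.rpow_add hσ]; ring_nf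
  have e3 : σ2 ^ (a-1) * (σ2 * σ2^b) = σ2 ^ (a+b) := by
    nth_rewrite 2 [← Real.rpow_one σ2]
    rw [← Real.rpow_add hσ, ← Real.rpow_add hσ]; ring_nf
  field_simp
  linear_combination (σ2 * σ2^(a-1) * (x+σ2)^(a+b)) * e2 +
    ((x+σ2)^(a+b)) * e3 +
    (-(σ2^(a+b))) * e1

/-- 1D change of variables for lower integrals. -/
lemma lintegral_image_abs_deriv {s : Set ℝ} {f f' : ℝ → ℝ} (hs : MeasurableSet s)
    (hf' : ∀ x ∈ s, HasDerivWithinAt f (f' x) s x) (hf : Set.InjOn f s) (g : ℝ → ENNReal) :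
    ∫⁻ x in f '' s, g x = ∫⁻ x in s, ENNReal.ofReal |f' x| * g (f x) := by
  simpa only [ContinuousLinearMap.det_toSpanSingleton] using
    MeasureTheory.lintegral_image_eq_lintegral_abs_det_fderiv_mul volume hs
      (fun x hx => (hf' x hx).hasFDerivWithinAt) hf g

/-- Restrict a gbp-density integral to the positive half line. -/
lemma lintegral_gbp_restrict (a b σ2 : ℝ) (t : Set ℝ) :
    ∫⁻ x in t, ENNReal.ofReal (gbpPdf a b 1 σ2 x) =
      ∫⁻ x in Set.Ioi 0 ∩ t, ENNReal.ofReal (gbpPdf a b 1 σ2 x) := by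
  have h0 : ∀ᵐ x ∂(volume.restrict t), x ≠ (0:ℝ) := by
    refine ae_restrict_of_ae ?_
    rw [ae_iff]
    have : {x : ℝ | ¬x ≠ 0} = {0} := by ext x; simp
    rw [this]
    exact Real.volume_singleton
  have : ∫⁻ x in t, ENNReal.ofReal (gbpPdf a b 1 σ2 x) =
      ∫⁻ x in t, (Set.Ioi 0).indicator (fun x => ENNReal.ofReal (gbpPdf a b 1 σ2 x)) x := by
    refine lintegral_congr_ae (h0.mono fun x hx => ?_)
    by_cases hxp : (0:ℝ) < x
    · simp [Set.indicator_of_mem (Set.mem_Ioi.2 hxp)]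
    · have hneg : x < 0 := lt_of_le_of_ne (not_lt.1 hxp) hx
      rw [Set.indicator_of_notMem (by simpa using hxp)]
      have : gbpPdf a b 1 σ2 x = 0 := by rw [gbpPdf, if_neg (not_le.2 hneg)]
      simp [this]
  rw [this, lintegral_indicator measurableSet_Ioi, Measure.restrict_restrict measurableSet_Ioi]

lemma map_gbp_eq_beta {a b σ2 : ℝ} (ha : 0 < a) (hb : 0 < b) (hσ : 0 < σ2) :
    Measure.map (fun x => x / (x + σ2)) (pdfMeasure (gbpPdf a b 1 σ2)) =
      pdfMeasure (betaPdf a b) := by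
  have hg : Measurable fun x : ℝ => x / (x + σ2) :=
    measurable_id.div (measurable_id.add_const σ2)
  ext A hA
  rw [Measure.map_apply hg hA, pdfMeasure, pdfMeasure,
    withDensity_apply _ (hg hA), withDensity_apply _ hA]
  set s : Set ℝ := Set.Ioi 0 ∩ (fun x : ℝ => x / (x + σ2)) ⁻¹' A with hs_def
  have hs : MeasurableSet s := measurableSet_Ioi.inter (hg hA)
  -- RHS restricted to (0,1)
  have hR : ∫⁻ x in A, ENNReal.ofReal (betaPdf a b x) =
      ∫⁻ x in Set.Ioo 0 1 ∩ A, ENNReal.ofReal (betaPdf a b x) := by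
    have heq : (fun x => ENNReal.ofReal (betaPdf a b x)) =
        (Set.Ioo 0 1).indicator (fun x => ENNReal.ofReal (betaPdf a b x)) := by
      funext x
      by_cases hx : x ∈ Set.Ioo (0:ℝ) 1
      · rw [Set.indicator_of_mem hx]
      · rw [Set.indicator_of_notMem hx, betaPdf, if_neg (by simpa [Set.mem_Ioo] using hx)]
        simp
    rw [heq, lintegral_indicator measurableSet_Ioo,
      Measure.restrict_restrict measurableSet_Ioo]
    exact lintegral_congr fun x => congrFun heq x
  -- image of s
  have himg : (fun x : ℝ => x / (x + σ2)) '' s = Set.Ioo 0 1 ∩ A := by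
    ext y
    constructor
    · rintro ⟨x, ⟨hx, hxA⟩, rfl⟩
      have hx' : (0:ℝ) < x := hx
      have hu : 0 < x + σ2 := by linarith
      exact ⟨⟨div_pos hx' hu, (div_lt_one hu).2 (by linarith)⟩, hxA⟩
    · rintro ⟨⟨hy0, hy1⟩, hyA⟩
      refine ⟨σ2 * y / (1 - y), ?_, ?_⟩
      · have hx : 0 < σ2 * y / (1 - y) := div_pos (mul_pos hσ hy0) (by linarith)
        have hgy : σ2 * y / (1 - y) / (σ2 * y / (1 - y) + σ2) = y := by
          have h1y : (1:ℝ) - y ≠ 0 := by linarith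
          rw [div_eq_iff (by positivity)]
          field_simp
          ring
        exact ⟨hx, by simpa [hgy] using hyA⟩
      · have h1y : (1:ℝ) - y ≠ 0 := by linarith
        have hx : 0 < σ2 * y / (1 - y) := div_pos (mul_pos hσ hy0) (by linarith)
        rw [div_eq_iff (by positivity)]
        field_simp
        ring
  -- derivative
  have hder : ∀ x ∈ s, HasDerivWithinAt (fun x : ℝ => x / (x + σ2))
      (σ2 / (x + σ2) ^ 2) s x := by
    intro x hx
    have hu : 0 < x + σ2 := by have : (0:ℝ) < x := hx.1; linarith
    have h := (hasDerivAt_id x).div ((hasDerivAt_id x).add_const σ2) hu.ne'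
    simp only [id_eq, one_mul, mul_one] at h
    have heq2 : (x + σ2 - x) / (x + σ2) ^ 2 = σ2 / (x + σ2) ^ 2 := by ring_nf
    rw [heq2] at h
    exact h.hasDerivWithinAt
  -- injectivity
  have hinj : Set.InjOn (fun x : ℝ => x / (x + σ2)) s := by
    intro x hx y hy hxy
    have hxp : (0:ℝ) < x := hx.1
    have hyp : (0:ℝ) < y := hy.1
    have hux : (0:ℝ) < x + σ2 := by linarith
    have huy : (0:ℝ) < y + σ2 := by linarith
    have := (div_eq_div_iff hux.ne' huy.ne').1 hxy
    nlinarith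
  rw [lintegral_gbp_restrict, ← hs_def, hR, ← himg, lintegral_image_abs_deriv hs hder hinj]
  refine setLIntegral_congr_fun hs (fun x hx => ?_)
  have hxp : (0:ℝ) < x := hx.1
  have hu : 0 < x + σ2 := by linarith
  rw [abs_of_pos (by positivity), ← ENNReal.ofReal_mul (by positivity),
    key_pointwise ha hb hσ hxp]

lemma pdfMeasure_gbp_pos (a b σ2 : ℝ) :
    pdfMeasure (gbpPdf a b 1 σ2) (Set.Iic 0) = 0 := by
  rw [pdfMeasure, withDensity_apply _ measurableSet_Iic, lintegral_gbp_restrict]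
  have : Set.Ioi (0:ℝ) ∩ Set.Iic 0 = ∅ := by
    ext x; simp only [Set.mem_inter_iff, Set.mem_Ioi, Set.mem_Iic, Set.mem_empty_iff_false,
      iff_false, not_and, not_le]
    intro h; exact h
  rw [this]
  simp

/-- With R² = v / (v + σ²) for fixed σ² > 0 and a positive random variable v,
R² ~ Beta(a, b) if and only if v ~ GBP(a, b, 1, σ²). -/
theorem beta_R2_iff_gbp_v {Ω : Type*} [MeasurableSpace Ω] (μ : Measure Ω)
    [IsProbabilityMeasure μ] (a b σ2 : ℝ)
    (ha : 0 < a) (hb : 0 < b) (hσ : 0 < σ2)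
    (v : Ω → ℝ) (hm : Measurable v) (hv : ∀ ω, 0 < v ω) :
    Measure.map (fun ω => v ω / (v ω + σ2)) μ = pdfMeasure (betaPdf a b) ↔
      Measure.map v μ = pdfMeasure (gbpPdf a b 1 σ2) := by
  have hg : Measurable fun x : ℝ => x / (x + σ2) :=
    measurable_id.div (measurable_id.add_const σ2)
  have hh : Measurable fun y : ℝ => σ2 * y / (1 - y) :=
    (measurable_const.mul measurable_id).div (measurable_const.sub measurable_id)
  have hR2m : Measurable fun ω => v ω / (v ω + σ2) := hm.div (hm.add_const σ2)
  have hcomp : (fun ω => v ω / (v ω + σ2)) = (fun x : ℝ => x / (x + σ2)) ∘ v := rfl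
  -- map h ∘ map g = id on gbp
  have hhg : Measure.map (fun y : ℝ => σ2 * y / (1 - y))
      (Measure.map (fun x : ℝ => x / (x + σ2)) (pdfMeasure (gbpPdf a b 1 σ2))) =
      pdfMeasure (gbpPdf a b 1 σ2) := by
    rw [Measure.map_map hh hg]
    have hae : ((fun y : ℝ => σ2 * y / (1 - y)) ∘ fun x : ℝ => x / (x + σ2))
        =ᵐ[pdfMeasure (gbpPdf a b 1 σ2)] id := by
      rw [Filter.EventuallyEq, ae_iff]
      refine measure_mono_null (fun x hx => ?_) (pdfMeasure_gbp_pos a b σ2)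
      simp only [Set.mem_setOf_eq, Function.comp_apply, id_eq] at hx
      by_contra hxpos
      simp only [Set.mem_Iic, not_le] at hxpos
      apply hx
      have hu : 0 < x + σ2 := by linarith
      have h1 : 1 - x / (x + σ2) = σ2 / (x + σ2) := by field_simp; ring
      rw [h1]
      field_simp
    rw [Measure.map_congr hae, Measure.map_id]
  constructor
  · intro hbeta
    have hv_eq : v = (fun y : ℝ => σ2 * y / (1 - y)) ∘ fun ω => v ω / (v ω + σ2) := by
      funext ω
      have hx := hv ω
      have hu : 0 < v ω + σ2 := by linarith
      simp only [Function.comp_apply]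
      have h1 : 1 - v ω / (v ω + σ2) = σ2 / (v ω + σ2) := by field_simp; ring
      rw [h1]
      field_simp
    rw [hv_eq, ← Measure.map_map hh hR2m, hbeta, ← map_gbp_eq_beta ha hb hσ, hhg]
  · intro hgbp
    rw [hcomp, ← Measure.map_map hg hm, hgbp, map_gbp_eq_beta ha hb hσ]
end
end

section
/- Let γ ~ Gamma(b,1), U|γ ~ Gamma(a, rate γ), and independently V ~ InverseGamma(α, β⁻¹). Then W = UV has the same distribution as the hierarchical model γ ~ Gamma(b,1), W|γ ~ GBP(a, α, 1, (βγ)⁻¹). -/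
open MeasureTheory ProbabilityTheory Real Filter Finset

noncomputable section

open scoped ENNReal

/-- 1D change of variables for lintegral. -/
lemma my_cov {s : Set ℝ} (hs : MeasurableSet s) {f f' : ℝ → ℝ}
    (hf' : ∀ x ∈ s, HasDerivWithinAt f (f' x) s x) (hf : Set.InjOn f s) (g : ℝ → ℝ≥0∞) :
    ∫⁻ x in f '' s, g x = ∫⁻ x in s, ENNReal.ofReal |f' x| * g (f x) := by
  rw [lintegral_image_eq_lintegral_abs_det_fderiv_mul volume hs
    (fun x hx => (hf' x hx).hasFDerivWithinAt) hf g]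
  simp [ContinuousLinearMap.det_toSpanSingleton]

/-- substitution x ↦ x⁻¹ on (0,∞). -/
lemma my_sub_inv (G : ℝ → ℝ≥0∞) :
    ∫⁻ y in Set.Ioi (0:ℝ), G y = ∫⁻ x in Set.Ioi (0:ℝ), ENNReal.ofReal ((x^2)⁻¹) * G x⁻¹ := by
  have himg : (fun x : ℝ => x⁻¹) '' Set.Ioi 0 = Set.Ioi 0 := by
    ext y
    constructor
    · rintro ⟨x, hx, rfl⟩; exact Set.mem_Ioi.2 (inv_pos.2 (Set.mem_Ioi.1 hx))
    · intro hy; exact ⟨y⁻¹, Set.mem_Ioi.2 (inv_pos.2 (Set.mem_Ioi.1 hy)), inv_inv y⟩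
  have := my_cov (f := fun x : ℝ => x⁻¹) (f' := fun x => -(x^2)⁻¹) measurableSet_Ioi
    (fun x hx => ((hasDerivAt_inv (ne_of_gt hx)).hasDerivWithinAt))
    (fun x hx y hy h => by simpa using inv_inj.1 h) G
  rw [himg] at this
  rw [this]
  refine setLIntegral_congr_fun measurableSet_Ioi (fun x hx => ?_)
  rw [abs_neg, abs_inv, abs_of_nonneg (sq_nonneg x)]

/-- pushforward of a density under multiplication by a positive constant. -/
lemma my_map_mul_right (F : ℝ → ℝ≥0∞) {v : ℝ} (hv : 0 < v) :
    Measure.map (fun x => x * v) (volume.withDensity F)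
      = volume.withDensity (fun y => ENNReal.ofReal v⁻¹ * F (y * v⁻¹)) := by
  ext s hs
  rw [Measure.map_apply (measurable_mul_const v) hs,
    withDensity_apply _ (hs.preimage (measurable_mul_const v)), withDensity_apply _ hs]
  have himg : (fun y : ℝ => y * v⁻¹) '' s = (fun x : ℝ => x * v) ⁻¹' s := by
    ext x
    constructor
    · rintro ⟨y, hy, rfl⟩
      simpa [Set.mem_preimage, mul_assoc, inv_mul_cancel₀ (ne_of_gt hv)] using hy
    · intro hx
      exact ⟨x * v, hx, by field_simp⟩
  rw [← himg, my_cov hs (f := fun y : ℝ => y * v⁻¹) (f' := fun _ => v⁻¹)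
    (fun x hx => (hasDerivAt_mul_const v⁻¹).hasDerivWithinAt)
    (fun x hx y hy h => by field_simp at h; exact h) F]
  refine setLIntegral_congr_fun hs (fun x hx => ?_)
  rw [abs_of_nonneg (inv_nonneg.2 hv.le)]

/-- pushforward of a density supported on (0,∞) under inversion. -/
lemma my_map_inv (F : ℝ → ℝ≥0∞) (h0 : ∀ x ≤ (0:ℝ), F x = 0) :
    Measure.map (fun x : ℝ => x⁻¹) (volume.withDensity F)
      = volume.withDensity (fun y => ENNReal.ofReal ((y^2)⁻¹) * F y⁻¹) := by
  ext s hs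
  rw [Measure.map_apply measurable_inv hs, withDensity_apply _ (hs.preimage measurable_inv),
    withDensity_apply _ hs]
  have key : ∀ (A : Set ℝ), MeasurableSet A → ∀ (G : ℝ → ℝ≥0∞), (∀ x, x ≤ 0 → G x = 0) →
      ∫⁻ x in A, G x = ∫⁻ x in A ∩ Set.Ioi 0, G x := by
    intro A hA G hG
    rw [← lintegral_indicator hA, ← lintegral_indicator (hA.inter measurableSet_Ioi)]
    refine lintegral_congr fun x => ?_
    by_cases hx : x ∈ A
    · by_cases hx0 : 0 < x
      · simp [Set.indicator, hx, hx0]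
      · simp [Set.indicator, hx, hx0, hG x (le_of_not_gt hx0)]
    · simp [Set.indicator, hx]
  rw [key _ (hs.preimage measurable_inv) F h0,
    key s hs _ (fun x hx => by
      have : F x⁻¹ = 0 := h0 _ (inv_nonpos.2 hx)
      simp [this])]
  have himg : (fun x : ℝ => x⁻¹) '' (s ∩ Set.Ioi 0) = (fun x : ℝ => x⁻¹) ⁻¹' s ∩ Set.Ioi 0 := by
    ext x
    constructor
    · rintro ⟨y, ⟨hy, hy0⟩, rfl⟩
      exact ⟨by simpa [inv_inv] using hy, Set.mem_Ioi.2 (inv_pos.2 (Set.mem_Ioi.1 hy0))⟩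
    · rintro ⟨hx, hx0⟩
      exact ⟨x⁻¹, ⟨hx, Set.mem_Ioi.2 (inv_pos.2 (Set.mem_Ioi.1 hx0))⟩, inv_inv x⟩
  rw [← himg, my_cov (hs.inter measurableSet_Ioi) (f := fun x : ℝ => x⁻¹)
    (f' := fun x => -(x^2)⁻¹)
    (fun x hx => ((hasDerivAt_inv (ne_of_gt hx.2)).hasDerivWithinAt))
    (fun x hx y hy h => by simpa using inv_inj.1 h) F]
  refine setLIntegral_congr_fun (hs.inter measurableSet_Ioi)
    (fun x hx => ?_)
  rw [abs_neg, abs_inv, abs_of_nonneg (sq_nonneg x)]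

/-- mixture of densities is a density. -/
lemma my_bind (pm : Measure ℝ) [SFinite pm] (h : ℝ → ℝ → ℝ≥0∞)
    (hh : Measurable (Function.uncurry h)) :
    pm.bind (fun γ => volume.withDensity (h γ))
      = volume.withDensity (fun x => ∫⁻ γ, h γ x ∂pm) := by
  have hker : Measurable fun γ => volume.withDensity (h γ) := by
    refine Measure.measurable_of_measurable_coe _ fun t ht => ?_
    simp_rw [withDensity_apply _ ht]
    exact Measurable.lintegral_prod_right' (f := fun p : ℝ × ℝ => h p.1 p.2) hh
  ext s hs
  rw [Measure.bind_apply hs hker.aemeasurable, withDensity_apply _ hs]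
  simp_rw [withDensity_apply _ hs]
  rw [lintegral_lintegral_swap (hh.aemeasurable)]

/-- the Gamma integral. -/
lemma my_gint {s r : ℝ} (hs : 0 < s) (hr : 0 < r) :
    ∫⁻ x in Set.Ioi (0:ℝ), ENNReal.ofReal (x ^ (s-1) * Real.exp (-(r * x)))
      = ENNReal.ofReal (Real.Gamma s / r ^ s) := by
  have h1 := ProbabilityTheory.lintegral_gammaPDF_eq_one hs hr
  unfold ProbabilityTheory.gammaPDF at h1
  rw [← lintegral_add_compl (f := fun x => ENNReal.ofReal (ProbabilityTheory.gammaPDFReal s r x))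
    (measurableSet_Ioi (a := (0:ℝ)))] at h1
  have h2 : ∫⁻ x in (Set.Ioi (0:ℝ))ᶜ,
      ENNReal.ofReal (ProbabilityTheory.gammaPDFReal s r x) = 0 := by
    rw [Set.compl_Ioi]
    rw [Measure.restrict_congr_set (Iio_ae_eq_Iic (a := (0:ℝ))).symm]
    have hz : ∀ x ∈ Set.Iio (0:ℝ),
        ENNReal.ofReal (ProbabilityTheory.gammaPDFReal s r x) = 0 := fun x hx => by
      rw [ProbabilityTheory.gammaPDFReal, if_neg (not_le.2 hx), ENNReal.ofReal_zero]
    rw [setLIntegral_congr_fun measurableSet_Iio hz]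
    simp
  rw [h2, add_zero] at h1
  have h3 : ∫⁻ x in Set.Ioi (0:ℝ), ENNReal.ofReal (ProbabilityTheory.gammaPDFReal s r x)
      = ENNReal.ofReal (r ^ s / Real.Gamma s) * ∫⁻ x in Set.Ioi (0:ℝ),
        ENNReal.ofReal (x ^ (s-1) * Real.exp (-(r * x))) := by
    rw [← lintegral_const_mul' _ _ ENNReal.ofReal_ne_top]
    refine setLIntegral_congr_fun measurableSet_Ioi (
      (fun x (hx : 0 < x) => ?_))
    rw [ProbabilityTheory.gammaPDFReal, if_pos hx.le, ← ENNReal.ofReal_mul (by positivity)]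
    ring_nf
  rw [h3] at h1
  have hc : (0:ℝ) < r ^ s / Real.Gamma s :=
    div_pos (rpow_pos_of_pos hr s) (Gamma_pos_of_pos hs)
  have hne : ENNReal.ofReal (r ^ s / Real.Gamma s) ≠ 0 := by
    simp [ENNReal.ofReal_eq_zero, not_le, hc]
  calc ∫⁻ x in Set.Ioi (0:ℝ), ENNReal.ofReal (x ^ (s-1) * Real.exp (-(r * x)))
      = (ENNReal.ofReal (r ^ s / Real.Gamma s))⁻¹ * (ENNReal.ofReal (r ^ s / Real.Gamma s)
        * ∫⁻ x in Set.Ioi (0:ℝ), ENNReal.ofReal (x ^ (s-1) * Real.exp (-(r * x)))) := by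
        rw [← mul_assoc, ENNReal.inv_mul_cancel hne ENNReal.ofReal_ne_top, one_mul]
    _ = (ENNReal.ofReal (r ^ s / Real.Gamma s))⁻¹ * 1 := by rw [h1]
    _ = ENNReal.ofReal (Real.Gamma s / r ^ s) := by
        rw [mul_one, ← ENNReal.ofReal_inv_of_pos hc, inv_div]

lemma my_core (a α β γ : ℝ) (ha : 0 < a) (hα : 0 < α) (hβ : 0 < β) (hγ : 0 < γ)
    {w : ℝ} (hw : w ≠ 0) :
    ∫⁻ v, (ENNReal.ofReal ((v^2)⁻¹) * ENNReal.ofReal (gammaPdf α β⁻¹ v⁻¹)) *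
        (ENNReal.ofReal v⁻¹ * ENNReal.ofReal (gammaPdf a γ (w * v⁻¹)))
      = ENNReal.ofReal (gbpPdf a α 1 ((β*γ)⁻¹) w) := by
  have hvanish : ∀ v : ℝ, ¬ (0 < v) →
      (ENNReal.ofReal ((v^2)⁻¹) * ENNReal.ofReal (gammaPdf α β⁻¹ v⁻¹)) *
        (ENNReal.ofReal v⁻¹ * ENNReal.ofReal (gammaPdf a γ (w * v⁻¹))) = 0 := by
    intro v hv
    have : gammaPdf α β⁻¹ v⁻¹ = 0 := by
      rw [gammaPdf, if_neg (not_lt.2 (inv_nonpos.2 (le_of_not_gt hv)))]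
    rw [this]
    simp
  have hsplit : ∫⁻ v, (ENNReal.ofReal ((v^2)⁻¹) * ENNReal.ofReal (gammaPdf α β⁻¹ v⁻¹)) *
        (ENNReal.ofReal v⁻¹ * ENNReal.ofReal (gammaPdf a γ (w * v⁻¹)))
      = ∫⁻ v in Set.Ioi (0:ℝ),
        (ENNReal.ofReal ((v^2)⁻¹) * ENNReal.ofReal (gammaPdf α β⁻¹ v⁻¹)) *
        (ENNReal.ofReal v⁻¹ * ENNReal.ofReal (gammaPdf a γ (w * v⁻¹))) := by
    rw [← lintegral_indicator measurableSet_Ioi]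
    refine lintegral_congr fun v => ?_
    by_cases hv : 0 < v
    · simp [Set.indicator, hv]
    · simp [Set.indicator, hv, hvanish v hv]
  rw [hsplit]
  rcases lt_or_gt_of_ne hw with hwneg | hwpos
  · have hz : ∀ v ∈ Set.Ioi (0:ℝ),
        (ENNReal.ofReal ((v^2)⁻¹) * ENNReal.ofReal (gammaPdf α β⁻¹ v⁻¹)) *
        (ENNReal.ofReal v⁻¹ * ENNReal.ofReal (gammaPdf a γ (w * v⁻¹))) = 0 := by
      intro v hv
      have : gammaPdf a γ (w * v⁻¹) = 0 := by
        rw [gammaPdf, if_neg]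
        simp only [not_lt]
        exact mul_nonpos_iff.2 (Or.inr ⟨hwneg.le, (inv_pos.2 hv).le⟩)
      rw [this]
      simp
    rw [setLIntegral_congr_fun measurableSet_Ioi hz]
    rw [gbpPdf, if_neg (not_le.2 hwneg)]
    simp
  · set G : ℝ → ℝ≥0∞ := fun t => ENNReal.ofReal (gammaPdf α β⁻¹ t) *
      (ENNReal.ofReal t * ENNReal.ofReal (gammaPdf a γ (w * t))) with hG
    have step1 : ∫⁻ v in Set.Ioi (0:ℝ),
        (ENNReal.ofReal ((v^2)⁻¹) * ENNReal.ofReal (gammaPdf α β⁻¹ v⁻¹)) *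
        (ENNReal.ofReal v⁻¹ * ENNReal.ofReal (gammaPdf a γ (w * v⁻¹)))
        = ∫⁻ t in Set.Ioi (0:ℝ), G t := by
      rw [my_sub_inv G]
      exact lintegral_congr fun v => by rw [hG]; ring
    rw [step1]
    set K : ℝ := β⁻¹ ^ α / Real.Gamma α * (γ ^ a / Real.Gamma a) * w ^ (a-1) with hK
    set r : ℝ := β⁻¹ + γ * w with hr
    have hrpos : 0 < r := by positivity
    have hKnn : 0 ≤ K := by
      have h0 : (0:ℝ) ≤ w ^ (a-1) := rpow_nonneg hwpos.le _
      have h1 : (0:ℝ) ≤ β⁻¹ ^ α := rpow_nonneg (by positivity) _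
      have h2 := Real.Gamma_pos_of_pos hα
      have h3 := Real.Gamma_pos_of_pos ha
      positivity
    have step2 : ∀ t ∈ Set.Ioi (0:ℝ),
        G t = ENNReal.ofReal (K * (t ^ (a+α-1) * Real.exp (-(r * t)))) := by
      intro t ht
      rw [Set.mem_Ioi] at ht
      have hwt : 0 < w * t := mul_pos hwpos ht
      have hp1 : gammaPdf α β⁻¹ t
          = β⁻¹ ^ α / Real.Gamma α * t ^ (α-1) * Real.exp (-(β⁻¹ * t)) := by
        rw [gammaPdf, if_pos ht]
      have hp2 : gammaPdf a γ (w * t)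
          = γ ^ a / Real.Gamma a * (w*t) ^ (a-1) * Real.exp (-(γ * (w*t))) := by
        rw [gammaPdf, if_pos hwt]
      have hp1nn : 0 ≤ gammaPdf α β⁻¹ t := by
        rw [hp1]
        have h1 : (0:ℝ) ≤ β⁻¹ ^ α := rpow_nonneg (by positivity) _
        have h2 := Real.Gamma_pos_of_pos hα
        positivity
      simp only [hG]
      rw [← ENNReal.ofReal_mul ht.le, ← ENNReal.ofReal_mul hp1nn]
      congr 1
      rw [hp1, hp2, Real.mul_rpow hwpos.le ht.le]
      have hT : t ^ (α-1) * t * t ^ (a-1) = t ^ (a+α-1) := by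
        rw [show a+α-1 = (α-1)+1+(a-1) by ring, Real.rpow_add ht, Real.rpow_add ht,
          Real.rpow_one]
      have hE : Real.exp (-(β⁻¹ * t)) * Real.exp (-(γ * (w * t))) = Real.exp (-(r * t)) := by
        rw [← Real.exp_add]; congr 1; rw [hr]; ring
      rw [← hT, ← hE]
      ring
    rw [setLIntegral_congr_fun measurableSet_Ioi step2]
    have step3 : ∫⁻ t in Set.Ioi (0:ℝ), ENNReal.ofReal (K * (t ^ (a+α-1) * Real.exp (-(r * t))))
        = ENNReal.ofReal K * ENNReal.ofReal (Real.Gamma (a+α) / r ^ (a+α)) := by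
      simp_rw [ENNReal.ofReal_mul hKnn]
      rw [lintegral_const_mul' _ _ ENNReal.ofReal_ne_top]
      congr 1
      exact my_gint (by positivity) hrpos
    rw [step3, ← ENNReal.ofReal_mul hKnn]
    congr 1
    have hbγ : 0 < β * γ := mul_pos hβ hγ
    have hQ : 0 < 1 + w * (β * γ) := by positivity
    have hΓa := Real.Gamma_pos_of_pos ha
    have hΓα := Real.Gamma_pos_of_pos hα
    have hΓs := Real.Gamma_pos_of_pos (show (0:ℝ) < a + α by positivity)
    rw [gbpPdf, if_pos hwpos.le, betaFn, div_eq_mul_inv w, inv_inv, mul_one, Real.rpow_one]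
    have er : r ^ (a+α) = (β ^ a * β ^ α)⁻¹ * (1 + w * (β * γ)) ^ (a+α) := by
      have hrr : r = β⁻¹ * (1 + w * (β * γ)) := by rw [hr]; field_simp
      rw [hrr, Real.mul_rpow (inv_nonneg.2 hβ.le) hQ.le, Real.inv_rpow hβ.le, Real.rpow_add hβ]
    have e4 : (1 + w * (β * γ)) ^ (-(a+α)) = ((1 + w * (β * γ)) ^ (a+α))⁻¹ :=
      Real.rpow_neg hQ.le _
    have e1 : (w * (β * γ)) ^ (a-1) = w ^ (a-1) * (β ^ a * γ ^ a / (β * γ)) := by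
      rw [Real.mul_rpow hwpos.le hbγ.le, Real.rpow_sub hbγ, Real.rpow_one,
        Real.mul_rpow hβ.le hγ.le]
    have einv : (β:ℝ)⁻¹ ^ α = (β ^ α)⁻¹ := Real.inv_rpow hβ.le α
    have hQs : (0:ℝ) < (1 + w * (β * γ)) ^ (a+α) := rpow_pos_of_pos hQ _
    have hβa : (0:ℝ) < β ^ a := rpow_pos_of_pos hβ _
    have hβα : (0:ℝ) < β ^ α := rpow_pos_of_pos hβ _
    have hγa : (0:ℝ) < γ ^ a := rpow_pos_of_pos hγ _
    rw [hK, er, e4, e1, einv]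
    field_simp [hΓa.ne', hΓα.ne', hΓs.ne', hβ.ne', hγ.ne', hβa.ne', hβα.ne', hγa.ne', hQs.ne']


/-- Let γ ~ Gamma(b,1), U | γ ~ Gamma(a, rate γ) (so that marginally U is the γ-mixture of
Gamma(a, γ)), and independently V ~ InverseGamma(α, β⁻¹) (the law of 1/X for
X ~ Gamma(α, rate β⁻¹)). Then W = U·V has the same distribution as the hierarchical model
γ ~ Gamma(b,1), W | γ ~ GBP(a, α, 1, (βγ)⁻¹). -/
theorem product_eq_hierarchical_gbp (a b α β : ℝ)
    (ha : 0 < a) (hb : 0 < b) (hα : 0 < α) (hβ : 0 < β) :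
    Measure.map (fun p : ℝ × ℝ => p.1 * p.2)
      (Measure.prod
        ((pdfMeasure (gammaPdf b 1)).bind fun γ => pdfMeasure (gammaPdf a γ))
        (Measure.map (fun x => x⁻¹) (pdfMeasure (gammaPdf α β⁻¹))))
      = (pdfMeasure (gammaPdf b 1)).bind
          (fun γ => pdfMeasure (gbpPdf a α 1 ((β * γ)⁻¹))) := by
  have mgam : ∀ c : ℝ, Measurable (fun p : ℝ × ℝ => ENNReal.ofReal (gammaPdf c p.1 p.2)) := by
    intro c
    apply Measurable.ennreal_ofReal
    unfold gammaPdf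
    exact Measurable.ite (measurableSet_lt measurable_const measurable_snd)
      (by fun_prop) measurable_const
  have mgbp : Measurable (fun p : ℝ × ℝ => ENNReal.ofReal (gbpPdf a α 1 ((β * p.1)⁻¹) p.2)) := by
    apply Measurable.ennreal_ofReal
    unfold gbpPdf betaFn
    exact Measurable.ite (measurableSet_le measurable_const measurable_snd)
      (by fun_prop) measurable_const
  simp only [pdfMeasure]
  set pm : Measure ℝ := volume.withDensity (fun x => ENNReal.ofReal (gammaPdf b 1 x)) with hpm
  have hae : ∀ᵐ γ ∂pm, 0 < γ := by
    rw [ae_iff]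
    have hset : {γ : ℝ | ¬ 0 < γ} = Set.Iic 0 := by ext γ; simp
    rw [hset, hpm, withDensity_apply _ measurableSet_Iic]
    have hz : ∀ γ ∈ Set.Iic (0:ℝ), ENNReal.ofReal (gammaPdf b 1 γ) = 0 := fun γ hγ => by
      rw [gammaPdf, if_neg (not_lt.2 hγ), ENNReal.ofReal_zero]
    rw [setLIntegral_congr_fun measurableSet_Iic hz]
    simp
  rw [my_bind pm (fun γ x => ENNReal.ofReal (gammaPdf a γ x)) (mgam a),
    my_bind pm (fun γ x => ENNReal.ofReal (gbpPdf a α 1 ((β * γ)⁻¹) x)) mgbp,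
    my_map_inv (fun x => ENNReal.ofReal (gammaPdf α β⁻¹ x))
      (fun x hx => by
        show ENNReal.ofReal (gammaPdf α β⁻¹ x) = 0
        rw [gammaPdf, if_neg (not_lt.2 hx), ENNReal.ofReal_zero])]
  set M : ℝ → ℝ≥0∞ := fun x => ∫⁻ γ, ENNReal.ofReal (gammaPdf a γ x) ∂pm with hMdef
  set R : ℝ → ℝ≥0∞ :=
    fun y => ENNReal.ofReal ((y^2)⁻¹) * ENNReal.ofReal (gammaPdf α β⁻¹ y⁻¹) with hRdef
  have hM : Measurable M := by
    rw [hMdef]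
    exact Measurable.lintegral_prod_right'
      (f := fun p : ℝ × ℝ => ENNReal.ofReal (gammaPdf a p.2 p.1))
      ((mgam a).comp measurable_swap)
  have hR : Measurable R := by
    rw [hRdef]
    exact ((measurable_id.pow_const 2).inv.ennreal_ofReal).mul
      ((mgam α).comp (measurable_const.prodMk measurable_inv))
  have hRfin : ∀ v, R v ≠ ⊤ := fun v =>
    ENNReal.mul_ne_top ENNReal.ofReal_ne_top ENNReal.ofReal_ne_top
  ext s hs
  rw [Measure.map_apply measurable_mul hs, withDensity_apply _ hs,
    Measure.prod_apply_symm (measurable_mul hs),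
    lintegral_withDensity_eq_lintegral_mul _ hR
      (measurable_measure_prodMk_right (μ := volume.withDensity M) (measurable_mul hs))]
  have L2 : ∀ v : ℝ,
      (R * fun v => (volume.withDensity M)
        ((fun x => (x, v)) ⁻¹' ((fun p : ℝ × ℝ => p.1 * p.2) ⁻¹' s))) v
      = ∫⁻ w in s, R v * (ENNReal.ofReal v⁻¹ * M (w * v⁻¹)) := by
    intro v
    rw [Pi.mul_apply]
    by_cases hv : 0 < v
    · have hpre : ((fun x => (x, v)) ⁻¹' ((fun p : ℝ × ℝ => p.1 * p.2) ⁻¹' s))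
          = (fun x => x * v) ⁻¹' s := rfl
      rw [hpre, ← Measure.map_apply (measurable_mul_const v) hs, my_map_mul_right M hv,
        withDensity_apply _ hs, ← lintegral_const_mul' _ _ (hRfin v)]
    · have hRv : R v = 0 := by
        have hz : gammaPdf α β⁻¹ v⁻¹ = 0 := by
          rw [gammaPdf, if_neg (not_lt.2 (inv_nonpos.2 (le_of_not_gt hv)))]
        rw [hRdef]
        simp [hz]
      rw [hRv]
      simp
  rw [lintegral_congr L2]
  rw [lintegral_lintegral_swap (μ := volume) (ν := volume.restrict s)
    (f := fun v w => R v * (ENNReal.ofReal v⁻¹ * M (w * v⁻¹)))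
    (((hR.comp measurable_fst).mul ((measurable_fst.inv.ennreal_ofReal).mul
      (hM.comp (measurable_snd.mul measurable_fst.inv)))).aemeasurable)]
  have h0ae : ∀ᵐ w : ℝ, w ≠ 0 := by
    rw [ae_iff]
    have : {w : ℝ | ¬ w ≠ 0} = {0} := by ext w; simp
    rw [this]
    exact measure_singleton 0
  refine setLIntegral_congr_fun_ae hs (h0ae.mono fun w hw _ => ?_)
  have expand : ∀ v : ℝ, R v * (ENNReal.ofReal v⁻¹ * M (w * v⁻¹))
      = ∫⁻ γ, R v * (ENNReal.ofReal v⁻¹ * ENNReal.ofReal (gammaPdf a γ (w * v⁻¹))) ∂pm := by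
    intro v
    rw [hMdef]
    rw [← lintegral_const_mul' _ _ ENNReal.ofReal_ne_top,
      ← lintegral_const_mul' _ _ (hRfin v)]
  rw [lintegral_congr expand]
  rw [lintegral_lintegral_swap (μ := volume) (ν := pm)
    (f := fun v γ => R v * (ENNReal.ofReal v⁻¹ * ENNReal.ofReal (gammaPdf a γ (w * v⁻¹))))
    (((hR.comp measurable_fst).mul ((measurable_fst.inv.ennreal_ofReal).mul
      (((mgam a).comp (measurable_snd.prodMk
        ((measurable_fst.inv).const_mul w)))))).aemeasurable)]
  refine lintegral_congr_ae (hae.mono fun γ hγ => ?_)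
  simp only [hRdef]
  exact my_core a α β γ ha hα hβ hγ hw
end
end
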